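/- arXiv:1809.03358 — 2 statements merged into one kernel-verified Lean document; each statement's English description precedes it below -/
import Mathlib

section
/- Let ℓ : ℝ → ℝ be continuous with compact support contained in [t, ∞) for some t ∈ ℝ. For the dilation group δ^{(t)}_s : x ↦ e^s(x - t) + t fixing t, define F(s) = ∫_ℝ ℓ(x) L(δ^{(t)}_s x) dx where L is the primitive of ℓ. Then dF/ds at s = 0 equals ∫_ℝ (x - t) ℓ(x)² dx. -/
open Real MeasureTheory Set

/-- For `ℓ` continuous with compact support in `[t,∞)` and the dilation group
`δ^{(t)}_s : x ↦ e^s (x - t) + t` fixing `t`, the function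
`F(s) = ∫ ℓ(x) L(δ^{(t)}_s x) dx` satisfies `F'(0) = ∫ (x - t) ℓ(x)² dx`,
where `L` is the primitive of `ℓ`. -/
theorem derivative_of_dilated_pairing
    (t : ℝ) (ℓ : ℝ → ℝ) (hcont : Continuous ℓ) (hsupp : HasCompactSupport ℓ)
    (hsupp_t : tsupport ℓ ⊆ Set.Ici t)
    (L : ℝ → ℝ) (hL : ∀ x, L x = ∫ a in Set.Iic x, ℓ a)
    (F : ℝ → ℝ)
    (hF : ∀ s, F s = ∫ x, ℓ x * L (Real.exp s * (x - t) + t)) :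
    HasDerivAt F (∫ x, (x - t) * (ℓ x) ^ 2) 0 := by
  have hℓint : Integrable ℓ := hcont.integrable_of_hasCompactSupport hsupp
  -- L has derivative ℓ everywhere
  have hLderiv : ∀ y : ℝ, HasDerivAt L (ℓ y) y := by
    intro y
    have h1 : L = fun x => (∫ a in Set.Iic y, ℓ a) + ∫ a in y..x, ℓ a := by
      funext x
      rw [hL x, ← intervalIntegral.integral_Iic_sub_Iic hℓint.integrableOn hℓint.integrableOn]
      ring
    rw [h1]
    exact (intervalIntegral.integral_hasDerivAt_right hℓint.intervalIntegrable
      (hcont.stronglyMeasurableAtFilter _ _) hcont.continuousAt).const_add _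
  have hLcont : Continuous L := continuous_iff_continuousAt.2 fun y => (hLderiv y).continuousAt
  obtain ⟨M, hM⟩ := hsupp.exists_bound_of_continuous hcont
  obtain ⟨R, hRpos, hR⟩ := hsupp.isBounded.subset_closedBall_lt 0 t
  set F' : ℝ → ℝ → ℝ := fun s x =>
    ℓ x * (ℓ (Real.exp s * (x - t) + t) * (Real.exp s * (x - t))) with hF'
  have hφcont : ∀ s : ℝ, Continuous fun x : ℝ => Real.exp s * (x - t) + t := fun s => by
    continuity
  have hmeas : ∀ s : ℝ,
      AEStronglyMeasurable (fun x => ℓ x * L (Real.exp s * (x - t) + t)) volume := fun s =>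
    (hcont.mul (hLcont.comp (hφcont s))).aestronglyMeasurable
  have hint : Integrable (fun x => ℓ x * L (Real.exp 0 * (x - t) + t)) volume := by
    apply Continuous.integrable_of_hasCompactSupport (hcont.mul (hLcont.comp (hφcont 0)))
    exact hsupp.mul_right
  have hmeas' : AEStronglyMeasurable (F' 0) volume := by
    apply Continuous.aestronglyMeasurable
    exact hcont.mul ((hcont.comp (hφcont 0)).mul (by continuity))
  have hbint : Integrable (fun x => ‖ℓ x‖ * (M * (Real.exp 1 * R))) volume :=
    hℓint.norm.mul_const _
  have hbound : ∀ᵐ x : ℝ, ∀ s ∈ Metric.ball (0:ℝ) 1,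
      ‖F' s x‖ ≤ ‖ℓ x‖ * (M * (Real.exp 1 * R)) := by
    refine Filter.Eventually.of_forall fun x => fun s hs => ?_
    by_cases hx : x ∈ tsupport ℓ
    · have hxR : |x - t| ≤ R := by
        have := hR hx
        rwa [Metric.mem_closedBall, Real.dist_eq] at this
      have hs1 : s ≤ 1 := le_of_lt (lt_of_abs_lt (by simpa [Real.dist_eq] using hs))
      have hMn : ∀ y, |ℓ y| ≤ M := fun y => hM y
      calc ‖F' s x‖ = |ℓ x| * (|ℓ (Real.exp s * (x - t) + t)| * (Real.exp s * |x - t|)) := by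
            simp [hF', abs_mul, abs_of_pos (Real.exp_pos s)]
        _ ≤ ‖ℓ x‖ * (M * (Real.exp 1 * R)) := by
            gcongr
            · exact (Real.norm_eq_abs _).ge
            · exact (abs_nonneg _).trans (hMn 0)
            · exact hMn _
    · have hx0 : ℓ x = 0 := image_eq_zero_of_notMem_tsupport hx
      simp [hF', hx0]
  have hdiff : ∀ᵐ x : ℝ, ∀ s ∈ Metric.ball (0:ℝ) 1,
      HasDerivAt (fun s => ℓ x * L (Real.exp s * (x - t) + t)) (F' s x) s := by
    refine Filter.Eventually.of_forall fun x => fun s _ => ?_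
    have hin : HasDerivAt (fun s : ℝ => Real.exp s * (x - t) + t)
        (Real.exp s * (x - t)) s := ((Real.hasDerivAt_exp s).mul_const _).add_const t
    exact ((hLderiv _).comp s hin).const_mul (ℓ x)
  have key := (hasDerivAt_integral_of_dominated_loc_of_deriv_le (Metric.ball_mem_nhds 0 one_pos)
    (Filter.Eventually.of_forall hmeas) hint hmeas' hbound hbint hdiff).2
  have hFeq : F = fun s => ∫ x, ℓ x * L (Real.exp s * (x - t) + t) := funext hF
  rw [hFeq]
  have heq : (∫ x, (x - t) * (ℓ x) ^ 2) = ∫ x, F' 0 x := by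
    refine integral_congr_ae (Filter.Eventually.of_forall fun x => ?_)
    simp [hF', Real.exp_zero]
    ring
  rw [heq]
  exact key
end

section
/- For a real Schwartz function h on ℝ define ‖h‖² = ∫_0^∞ p |ĥ(p)|² dp, where ĥ is the Fourier transform. If h, k are real Schwartz functions, then the sesquilinear pairing ∫_0^∞ p ĥ(p) conj(k̂(p)) dp has imaginary part equal to (1/2)∫_ℝ k′(x) h(x) dx. -/
open Real MeasureTheory Complex FourierTransform
open scoped FourierTransform

noncomputable def SchwartzMap.toComplex (f : SchwartzMap ℝ ℝ) : SchwartzMap ℝ ℂ where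
  toFun x := (f x : ℂ)
  smooth' := Complex.ofRealCLM.contDiff.comp (f.smooth ⊤)
  decay' := by
    intro n k
    obtain ⟨C, hC⟩ := f.decay' n k
    refine ⟨C, fun x => ?_⟩
    have h1 : (fun x : ℝ => ((f x : ℝ) : ℂ)) = (Complex.ofRealLI : ℝ →ₗᵢ[ℝ] ℂ) ∘ f := rfl
    rw [h1, Complex.ofRealLI.norm_iteratedFDeriv_comp_left (f.smooth ⊤).contDiffAt
      (by exact_mod_cast le_top)]
    exact hC x

@[simp] lemma SchwartzMap.toComplex_apply (f : SchwartzMap ℝ ℝ) (x : ℝ) :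
    f.toComplex x = (f x : ℂ) := rfl

lemma conj_fourierIntegral_ofReal (f : ℝ → ℝ) (ξ : ℝ) :
    (starRingEnd ℂ) (𝓕 (fun x => (f x : ℂ)) ξ) = 𝓕 (fun x => (f x : ℂ)) (-ξ) := by
  rw [Real.fourier_real_eq_integral_exp_smul,
    Real.fourier_real_eq_integral_exp_smul, ← integral_conj]
  congr 1
  ext x
  simp only [smul_eq_mul, map_mul, Complex.conj_ofReal, ← Complex.exp_conj, Complex.conj_I,
    mul_neg]
  congr 1
  push_cast
  ring

lemma fourier_key (f : ℝ → ℝ) (p : ℝ) :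
    (∫ x : ℝ, (f x : ℂ) * Complex.exp (-(Complex.I * p * x)))
      = 𝓕 (fun x => (f x : ℂ)) (p / (2 * π)) := by
  rw [Real.fourier_real_eq_integral_exp_smul]
  congr 1
  ext x
  rw [smul_eq_mul, mul_comm]
  congr 1
  have hr : (-2 * π * x * (p / (2 * π)) : ℝ) = -(p * x) := by
    field_simp
  rw [hr]
  push_cast
  ring

/-- For real Schwartz functions `h, k` with Fourier transforms
`ĥ(p) = (2π)^{-1/2} ∫ h(x) e^{-ipx} dx`, the imaginary part of the
one-particle pairing `∫_0^∞ p ĥ(p) conj(k̂(p)) dp` equals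
`(1/2) ∫ k'(x) h(x) dx`. -/
theorem one_particle_pairing_imaginary_part
    (h k : SchwartzMap ℝ ℝ)
    (Fh Fk : ℝ → ℂ)
    (hFh : ∀ p, Fh p = (Real.sqrt (2 * π))⁻¹ •
        ∫ x : ℝ, (h x : ℂ) * Complex.exp (-(Complex.I * p * x)))
    (hFk : ∀ p, Fk p = (Real.sqrt (2 * π))⁻¹ •
        ∫ x : ℝ, (k x : ℂ) * Complex.exp (-(Complex.I * p * x))) :
    (∫ p in Set.Ioi (0 : ℝ), (p : ℂ) * Fh p * (starRingEnd ℂ) (Fk p)).im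
      = (1/2) * ∫ x : ℝ, deriv (fun y => k y) x * h x := by
  set hC := h.toComplex with hC_def
  set kC := k.toComplex with kC_def
  have hC_coe : ⇑hC = fun x : ℝ => ((h x : ℝ) : ℂ) := rfl
  have kC_coe : ⇑kC = fun x : ℝ => ((k x : ℝ) : ℂ) := rfl
  have keyh : ∀ p : ℝ, Fh p = ((Real.sqrt (2 * π))⁻¹ : ℝ) • 𝓕 (⇑hC) (p / (2 * π)) := by
    intro p
    rw [hFh p, hC_coe, ← fourier_key]
  have keyk : ∀ p : ℝ, Fk p = ((Real.sqrt (2 * π))⁻¹ : ℝ) • 𝓕 (⇑kC) (p / (2 * π)) := by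
    intro p
    rw [hFk p, kC_coe, ← fourier_key]
  -- derivative Schwartz map
  set kD := SchwartzMap.derivCLM ℝ ℂ kC with kD_def
  have kD_eq : ⇑kD = deriv (⇑kC) := by
    ext x; exact SchwartzMap.derivCLM_apply ℝ kC x
  have kC_deriv : ∀ x : ℝ, deriv (⇑kC) x = ((deriv (⇑k) x : ℝ) : ℂ) := by
    intro x
    have hk : HasDerivAt (⇑k) (deriv (⇑k) x) x := (k.differentiableAt).hasDerivAt
    have hdd : HasDerivAt (⇑kC) ((deriv (⇑k) x : ℝ) : ℂ) x := by
      have := Complex.ofRealCLM.hasFDerivAt.comp_hasDerivAt x hk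
      rw [kC_coe]; simpa [Function.comp_def] using this
    exact hdd.deriv
  -- integrand rewrite and change of variables
  set Φ : ℝ → ℂ := fun ξ => (ξ : ℂ) * 𝓕 (⇑hC) ξ * (starRingEnd ℂ) (𝓕 (⇑kC) ξ) with Φ_def
  have csqR : ((Real.sqrt (2 * π))⁻¹ * (Real.sqrt (2 * π))⁻¹ : ℝ) = (2 * π)⁻¹ := by
    rw [← mul_inv, Real.mul_self_sqrt (by positivity)]
  have csq : (((Real.sqrt (2 * π))⁻¹ : ℝ) : ℂ) * (((Real.sqrt (2 * π))⁻¹ : ℝ) : ℂ)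
      = (((2 * π)⁻¹ : ℝ) : ℂ) := by exact_mod_cast congrArg Complex.ofReal csqR
  have integrand_eq : ∀ p : ℝ, (p : ℂ) * Fh p * (starRingEnd ℂ) (Fk p) = Φ ((2 * π)⁻¹ * p) := by
    intro p
    have harg : p / (2 * π) = (2 * π)⁻¹ * p := by ring
    rw [keyh p, keyk p, harg]
    show (p : ℂ) * ((((Real.sqrt (2 * π))⁻¹ : ℝ)) • 𝓕 (⇑hC) ((2 * π)⁻¹ * p))
        * (starRingEnd ℂ) ((((Real.sqrt (2 * π))⁻¹ : ℝ)) • 𝓕 (⇑kC) ((2 * π)⁻¹ * p))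
      = ((((2 * π)⁻¹ * p : ℝ)) : ℂ) * 𝓕 (⇑hC) ((2 * π)⁻¹ * p)
        * (starRingEnd ℂ) (𝓕 (⇑kC) ((2 * π)⁻¹ * p))
    simp only [real_smul, map_mul, Complex.conj_ofReal]
    set A := 𝓕 (⇑hC) ((2 * π)⁻¹ * p)
    set B := (starRingEnd ℂ) (𝓕 (⇑kC) ((2 * π)⁻¹ * p))
    calc (p : ℂ) * ((((Real.sqrt (2 * π))⁻¹ : ℝ) : ℂ) * A)
          * ((((Real.sqrt (2 * π))⁻¹ : ℝ) : ℂ) * B)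
        = ((((Real.sqrt (2 * π))⁻¹ : ℝ) : ℂ) * (((Real.sqrt (2 * π))⁻¹ : ℝ) : ℂ))
            * ((p : ℂ) * A * B) := by ring
      _ = (((2 * π)⁻¹ : ℝ) : ℂ) * ((p : ℂ) * A * B) := by rw [csq]
      _ = ((((2 * π)⁻¹ * p : ℝ)) : ℂ) * A * B := by push_cast; ring
  have cov : (∫ p in Set.Ioi (0 : ℝ), (p : ℂ) * Fh p * (starRingEnd ℂ) (Fk p))
      = (2 * π) • ∫ ξ in Set.Ioi (0 : ℝ), Φ ξ := by
    rw [setIntegral_congr_fun measurableSet_Ioi (fun p _ => integrand_eq p)]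
    rw [integral_comp_mul_left_Ioi Φ 0 (show (0:ℝ) < (2*π)⁻¹ by positivity)]
    rw [inv_inv, mul_zero]
  set J := ∫ ξ in Set.Ioi (0 : ℝ), Φ ξ with J_def
  -- reality: conj of FT
  have hconjh : ∀ ξ : ℝ, (starRingEnd ℂ) (𝓕 (⇑hC) ξ) = 𝓕 (⇑hC) (-ξ) := by
    intro ξ; rw [hC_coe]; exact conj_fourierIntegral_ofReal (⇑h) ξ
  have hconjk : ∀ ξ : ℝ, (starRingEnd ℂ) (𝓕 (⇑kC) ξ) = 𝓕 (⇑kC) (-ξ) := by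
    intro ξ; rw [kC_coe]; exact conj_fourierIntegral_ofReal (⇑k) ξ
  set Ψ : ℝ → ℂ := fun ξ => (ξ : ℂ) * 𝓕 (⇑hC) ξ * 𝓕 (⇑kC) (-ξ) with Ψ_def
  -- integrability of Ψ
  set SA : SchwartzMap ℝ ℂ := SchwartzMap.fourierTransformCLM ℝ hC with SA_def
  set SB : SchwartzMap ℝ ℂ := SchwartzMap.fourierTransformCLM ℝ kC with SB_def
  have SA_coe : ⇑SA = 𝓕 (⇑hC) := congrArg DFunLike.coe (SchwartzMap.fourierTransformCLM_apply ℝ hC)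
  have SB_coe : ⇑SB = 𝓕 (⇑kC) := congrArg DFunLike.coe (SchwartzMap.fourierTransformCLM_apply ℝ kC)
  have hΨint : Integrable Ψ := by
    have hcont : Continuous Ψ := by
      rw [Ψ_def, ← SA_coe, ← SB_coe]
      exact (Complex.continuous_ofReal.comp continuous_id |>.mul SA.continuous).mul
        (SB.continuous.comp continuous_neg)
    refine ((SA.integrable_pow_mul volume 1).mul_const
      ((SchwartzMap.seminorm ℝ 0 0) SB)).mono' hcont.aestronglyMeasurable ?_
    filter_upwards with ξ
    have hb : ‖𝓕 (⇑kC) (-ξ)‖ ≤ (SchwartzMap.seminorm ℝ 0 0) SB := by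
      rw [← SB_coe]; exact SchwartzMap.norm_le_seminorm ℝ SB (-ξ)
    calc ‖Ψ ξ‖ = ‖ξ‖ * ‖𝓕 (⇑hC) ξ‖ * ‖𝓕 (⇑kC) (-ξ)‖ := by
          simp only [Ψ_def, norm_mul, Complex.norm_real]
      _ ≤ ‖ξ‖ * ‖𝓕 (⇑hC) ξ‖ * ((SchwartzMap.seminorm ℝ 0 0) SB) :=
          mul_le_mul_of_nonneg_left hb (by positivity)
      _ = ‖ξ‖ ^ 1 * ‖SA ξ‖ * ((SchwartzMap.seminorm ℝ 0 0) SB) := by rw [pow_one, SA_coe]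
  have hJsub : J - (starRingEnd ℂ) J = ∫ ξ : ℝ, Ψ ξ := by
    have hΦΨ : ∀ ξ : ℝ, Φ ξ = Ψ ξ := by
      intro ξ
      show (ξ : ℂ) * 𝓕 (⇑hC) ξ * (starRingEnd ℂ) (𝓕 (⇑kC) ξ)
        = (ξ : ℂ) * 𝓕 (⇑hC) ξ * 𝓕 (⇑kC) (-ξ)
      rw [hconjk]
    have hJ1 : J = ∫ ξ in Set.Ioi (0:ℝ), Ψ ξ := by
      rw [J_def]; exact setIntegral_congr_fun measurableSet_Ioi (fun ξ _ => hΦΨ ξ)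
    have hJ2 : (starRingEnd ℂ) J = ∫ ξ in Set.Ioi (0:ℝ), -Ψ (-ξ) := by
      rw [J_def, ← integral_conj]
      refine setIntegral_congr_fun measurableSet_Ioi (fun ξ _ => ?_)
      simp only [Φ_def, Ψ_def, map_mul, Complex.conj_ofReal, hconjh, hconjk, neg_neg]
      push_cast
      ring
    rw [hJ2, hJ1]
    rw [integral_neg, sub_neg_eq_add]
    have hneg : (∫ ξ in Set.Ioi (0:ℝ), Ψ (-ξ)) = ∫ ξ in Set.Iic (0:ℝ), Ψ ξ := by
      have := integral_comp_neg_Ioi (0:ℝ) Ψ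
      rwa [neg_zero] at this
    rw [hneg]
    rw [add_comm]
    exact intervalIntegral.integral_Iic_add_Ioi hΨint.integrableOn hΨint.integrableOn
  -- derivative relation
  have hkD_int : Integrable (deriv (⇑kC)) := by rw [← kD_eq]; exact kD.integrable
  have hFT_deriv := Real.fourier_deriv kC.integrable kC.differentiable hkD_int
  have hΨ_eq : ∀ ξ : ℝ, Ψ ξ = (Complex.I / ((2 * π : ℝ) : ℂ))
      * (𝓕 (⇑hC) ξ * 𝓕 (⇑kD) (-ξ)) := by
    intro ξ
    have : 𝓕 (⇑kD) (-ξ) = (2 * ↑π * Complex.I * (-ξ : ℝ)) • 𝓕 (⇑kC) (-ξ) := by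
      rw [kD_eq, hFT_deriv]
    rw [this, Ψ_def]
    rw [smul_eq_mul]
    have h2π : ((2 * π : ℝ) : ℂ) ≠ 0 := by simp [Real.pi_ne_zero]
    have hπ : ((π : ℝ) : ℂ) ≠ 0 := Complex.ofReal_ne_zero.mpr Real.pi_ne_zero
    field_simp
    push_cast
    ring_nf
    rw [Complex.I_sq]
    ring_nf
  -- Parseval / inversion
  set SD : SchwartzMap ℝ ℂ := SchwartzMap.fourierTransformCLM ℝ kD with SD_def
  have SD_coe : ⇑SD = 𝓕 (⇑kD) := congrArg DFunLike.coe (SchwartzMap.fourierTransformCLM_apply ℝ kD)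
  have hg_int : Integrable (fun ξ : ℝ => 𝓕 (⇑kD) (-ξ)) := by
    rw [← SD_coe]
    have := SD.integrable (μ := volume)
    exact this.comp_mul_left' (R := -1) (by norm_num) |>.congr (by
      filter_upwards with ξ; simp)
  have hflip : (innerₗ ℝ).flip = innerₗ ℝ := by
    apply LinearMap.ext; intro x
    apply LinearMap.ext; intro y
    rw [LinearMap.flip_apply]
    exact real_inner_comm x y
  have parseval : (∫ ξ : ℝ, 𝓕 (⇑hC) ξ * 𝓕 (⇑kD) (-ξ))
      = ((∫ x : ℝ, deriv (⇑k) x * h x : ℝ) : ℂ) := by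
    have hL : Continuous fun p : ℝ × ℝ => (innerₗ ℝ) p.1 p.2 := continuous_inner
    have hfubini := VectorFourier.integral_bilin_fourierIntegral_eq_flip
      (ContinuousLinearMap.mul ℂ ℂ) Real.continuous_fourierChar hL
      (hC.integrable (μ := volume)) hg_int
    simp only [ContinuousLinearMap.mul_apply'] at hfubini
    rw [show (fun ξ : ℝ => 𝓕 (⇑hC) ξ * 𝓕 (⇑kD) (-ξ))
        = fun ξ : ℝ => (VectorFourier.fourierIntegral 𝐞 volume (innerₗ ℝ) (⇑hC) ξ)
          * ((fun w : ℝ => 𝓕 (⇑kD) (-w)) ξ) from rfl]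
    rw [hfubini, hflip]
    have hinv : ∀ x : ℝ, VectorFourier.fourierIntegral 𝐞 volume (innerₗ ℝ)
        (fun w : ℝ => 𝓕 (⇑kD) (-w)) x = kD x := by
      intro x
      have heq : (fun w : ℝ => 𝓕 (⇑kD) (-w)) = 𝓕⁻ (⇑kD) := by
        ext w
        rw [Real.fourierInv_eq_fourier_neg]
      have h1 : VectorFourier.fourierIntegral 𝐞 volume (innerₗ ℝ)
          (fun w : ℝ => 𝓕 (⇑kD) (-w)) x = 𝓕 (fun w : ℝ => 𝓕 (⇑kD) (-w)) x := rfl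
      rw [h1, heq]
      have hFkD_int : Integrable (𝓕 (⇑kD)) := by rw [← SD_coe]; exact SD.integrable
      rw [Continuous.fourier_fourierInv_eq kD.continuous kD.integrable hFkD_int]
    simp only [hinv]
    have hpt : ∀ x : ℝ, hC x * kD x = ((deriv (⇑k) x * h x : ℝ) : ℂ) := by
      intro x
      rw [kD_eq, kC_deriv x]
      simp only [hC_def, SchwartzMap.toComplex_apply]
      push_cast
      ring
    simp only [hpt]
    exact integral_ofReal
  -- conclude
  set r : ℝ := ∫ x : ℝ, deriv (⇑k) x * h x with r_def
  have hsub2 : J - (starRingEnd ℂ) J = Complex.I * ((r / (2 * π) : ℝ) : ℂ) := by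
    rw [hJsub]
    have : (∫ ξ : ℝ, Ψ ξ) = (Complex.I / ((2 * π : ℝ) : ℂ)) * ∫ ξ : ℝ, (𝓕 (⇑hC) ξ * 𝓕 (⇑kD) (-ξ)) :=
      calc (∫ ξ : ℝ, Ψ ξ)
          = ∫ ξ : ℝ, (Complex.I / ((2 * π : ℝ) : ℂ)) * (𝓕 (⇑hC) ξ * 𝓕 (⇑kD) (-ξ)) :=
            integral_congr_ae (Filter.Eventually.of_forall (fun ξ => hΨ_eq ξ))
        _ = (Complex.I / ((2 * π : ℝ) : ℂ)) * ∫ ξ : ℝ, (𝓕 (⇑hC) ξ * 𝓕 (⇑kD) (-ξ)) := by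
            simp_rw [← smul_eq_mul (α := ℂ)]
            exact integral_smul _ _
    rw [this, parseval]
    push_cast
    ring
  have hJim : J.im = r / (2 * π) / 2 := by
    have him := congrArg Complex.im hsub2
    simp only [Complex.sub_im, Complex.conj_im, Complex.mul_im, Complex.I_re, Complex.I_im,
      Complex.ofReal_re, Complex.ofReal_im, zero_mul, one_mul, mul_zero, add_zero,
      zero_add] at him
    linarith
  rw [cov, Complex.smul_im, hJim]
  field_simp
  rw [smul_eq_mul]
  field_simp
end
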